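/- Let R be a random RR set with width w(R), and define κ(R) = 1 − (1 − w(R)/m)^k. Let S* be the (deduplicated) set of k i.i.d. nodes each sampled with probability proportional to in-degree, and let KPT = E[I(S*)] be its mean expected spread. Then KPT = n · E[κ(R)]. -/
import Mathlib


open MeasureTheory ProbabilityTheory
open scoped Classical

lemma count_forall_not {α : Type*} [Fintype α] (k : ℕ) (p : α → Prop) [DecidablePred p] :
    (Finset.univ.filter (fun f : Fin k → α => ∀ i, ¬ p (f i))).card
      = (Fintype.card α - (Finset.univ.filter p).card) ^ k := by
  calc (Finset.univ.filter (fun f : Fin k → α => ∀ i, ¬ p (f i))).card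
      = Fintype.card {f : Fin k → α // ∀ i, ¬ p (f i)} := (Fintype.card_subtype _).symm
    _ = Fintype.card (Fin k → {a : α // ¬ p a}) :=
        Fintype.card_congr (Equiv.subtypePiEquivPi (p := fun _ a => ¬ p a))
    _ = (Fintype.card {a : α // ¬ p a}) ^ k := by
        simp [Fintype.card_fun]
    _ = (Fintype.card α - (Finset.univ.filter p).card) ^ k := by
        rw [Fintype.card_subtype_compl, Fintype.card_subtype]

lemma count_exists {α : Type*} [Fintype α] (k : ℕ) (p : α → Prop) [DecidablePred p] :
    (Finset.univ.filter (fun f : Fin k → α => ∃ i, p (f i))).card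
      = (Fintype.card α) ^ k - (Fintype.card α - (Finset.univ.filter p).card) ^ k := by
  have h := Finset.card_filter_add_card_filter_not
    (s := (Finset.univ : Finset (Fin k → α))) (p := fun f => ∃ i, p (f i))
  have h2 : (Finset.univ.filter (fun f : Fin k → α => ¬ ∃ i, p (f i))).card
      = (Fintype.card α - (Finset.univ.filter p).card) ^ k := by
    rw [← count_forall_not k p]
    simp only [not_exists]
  rw [h2] at h
  have hcard : (Finset.univ : Finset (Fin k → α)).card = (Fintype.card α) ^ k := by
    simp [Fintype.card_fun]
  rw [hcard] at h
  exact Nat.eq_sub_of_add_eq h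

lemma avg_lemma {α V : Type*} [Fintype α] [Nonempty α] [Fintype V] (k : ℕ)
    (q : α → V → Prop) :
    (((Fintype.card α : ℝ)) ^ k)⁻¹ *
      ∑ f : Fin k → α, ((Finset.univ.filter (fun v : V => ∃ i, q (f i) v)).card : ℝ)
    = ∑ v : V, (1 - (1 - ((Finset.univ.filter (fun a : α => q a v)).card : ℝ)
        / (Fintype.card α)) ^ k) := by
  classical
  have hm : (0 : ℝ) < Fintype.card α := by exact_mod_cast Fintype.card_pos
  have hswap : ∑ f : Fin k → α, ((Finset.univ.filter (fun v : V => ∃ i, q (f i) v)).card : ℝ)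
      = ∑ v : V, ((Finset.univ.filter (fun f : Fin k → α => ∃ i, q (f i) v)).card : ℝ) := by
    simp only [Finset.card_filter]
    push_cast
    rw [Finset.sum_comm]
  rw [hswap, Finset.mul_sum]
  apply Finset.sum_congr rfl
  intro v _
  set w := (Finset.univ.filter (fun a : α => q a v)).card with hw
  have hwle : w ≤ Fintype.card α := by
    rw [hw, ← Fintype.card_subtype]
    exact Fintype.card_subtype_le _
  rw [count_exists k (fun a => q a v)]
  have hle : (Fintype.card α - w) ^ k ≤ (Fintype.card α) ^ k :=
    Nat.pow_le_pow_left (Nat.sub_le _ _) k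
  rw [Nat.cast_sub hle]
  push_cast [Nat.cast_sub hwle]
  rw [mul_sub]
  rw [inv_mul_cancel₀ (by positivity)]
  congr 1
  rw [← div_eq_inv_mul, ← div_pow]
  congr 1
  field_simp


/-- Lemma 6 of Tang–Xiao–Shi: `KPT = n · E[κ(R)]` where `κ(R) = 1 - (1 - w(R)/m)^k`.
Here a random RR set `R` is generated for a uniformly random node on an edge-percolated
subgraph of `G`; `w(R)` is the number of edges of `G` pointing into `R`; and `KPT = E[I(S*)]`
is the mean spread of the set `S*` formed by the heads of `k` i.i.d. uniformly random edges
(equivalently, `k` i.i.d. nodes sampled with probability proportional to in-degree), the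
spread being the number of nodes reachable from `S*` in the percolated subgraph. -/
theorem kpt_eq_n_mul_expected_kappa
    {V : Type*} [Fintype V] [Nonempty V] [MeasurableSpace V] [MeasurableSingletonClass V]
    (E : V → V → Prop) [DecidableRel E]
    [Nonempty {e : V × V // E e.1 e.2}]
    (k : ℕ) (hk : 1 ≤ k)
    (m : ℕ) (hm : m = Fintype.card {e : V × V // E e.1 e.2})
    (μ : Measure (V → V → Bool)) [IsProbabilityMeasure μ] :
    ∫ x, ((Finset.univ.filter (fun w : V => ∃ i : Fin k,
          Relation.ReflTransGen (fun a b => E a b ∧ x.1 a b = true) ((x.2 i).val.2) w)).card : ℝ)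
      ∂(μ.prod (PMF.uniformOfFintype (Fin k → {e : V × V // E e.1 e.2})).toMeasure)
    = (Fintype.card V : ℝ) *
      ∫ x, (1 - (1 - ((Finset.univ.filter (fun e : {e : V × V // E e.1 e.2} =>
              Relation.ReflTransGen (fun a b => E a b ∧ x.1 a b = true) e.val.2 x.2)).card : ℝ)
            / m) ^ k)
        ∂(μ.prod (PMF.uniformOfFintype V).toMeasure) := by
  classical
  subst hm
  rw [MeasureTheory.integral_prod _ (Integrable.of_finite),
      MeasureTheory.integral_prod _ (Integrable.of_finite),
      ← MeasureTheory.integral_const_mul]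
  refine integral_congr_ae (Filter.Eventually.of_forall fun g => ?_)
  dsimp only
  rw [PMF.integral_eq_sum, PMF.integral_eq_sum]
  simp only [PMF.uniformOfFintype_apply, ENNReal.toReal_inv, ENNReal.toReal_natCast,
    smul_eq_mul]
  rw [← Finset.mul_sum, ← Finset.mul_sum, ← mul_assoc,
    mul_inv_cancel₀ (by exact_mod_cast Fintype.card_ne_zero : (Fintype.card V : ℝ) ≠ 0),
    one_mul]
  have := avg_lemma (α := {e : V × V // E e.1 e.2}) (V := V) k
    (fun e v => Relation.ReflTransGen (fun a b => E a b ∧ g a b = true) e.val.2 v)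
  rw [Fintype.card_fun]
  push_cast
  rw [Finset.mul_sum]
  simp only [Fintype.card_fin] at this ⊢
  rw [← Finset.mul_sum]
  convert this using 3
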